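/- Let G(x⃗) be a positive guard over variables x⃗ and let h be a history. Then the set of solutions of the guard instantiation problem (h, G(x⃗)), i.e., the set of tuples of constants u⃗ such that h ⊨ G(u⃗), is finite; moreover, every solution consists only of constants that appear in h. -/

import Mathlib

/-- Terms: variables, constants, and applications of interpreted function symbols
(function symbols are named by natural numbers). -/
inductive Tm (C : Type) : Type where
  | var : ℕ → Tm C
  | const : C → Tm C
  | func : ℕ → List (Tm C) → Tm C

/-- Evaluation of a term under an interpretation `F` of the function symbols and an
environment (variable assignment) `ρ`. -/
def Tm.eval {C : Type} (F : ℕ → List C → C) (ρ : ℕ → C) : Tm C → C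
  | .var x => ρ x
  | .const c => c
  | .func f args => F f (args.attach.map fun t => Tm.eval F ρ t.1)
  decreasing_by simp_wf; have := List.sizeOf_lt_of_mem t.2; omega

/-- Variables occurring in a term. -/
def Tm.fv {C : Type} : Tm C → List ℕ
  | .var x => [x]
  | .const _ => []
  | .func _ args => args.attach.flatMap fun t => Tm.fv t.1
  decreasing_by simp_wf; have := List.sizeOf_lt_of_mem t.2; omega

/-- PTLTL^FO formulas: uninterpreted predicate atoms, interpreted relation atoms,
conjunction, negation, "previous" X⁻¹, "since" S, and the guarded universal
quantifier `all xs p ψ` (∀(x₁,…,xₙ):p. ψ). -/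
inductive Fm (C : Type) : Type where
  | atom : ℕ → List (Tm C) → Fm C
  | rel : ℕ → List (Tm C) → Fm C
  | and : Fm C → Fm C → Fm C
  | not : Fm C → Fm C
  | prev : Fm C → Fm C
  | since : Fm C → Fm C → Fm C
  | all : List ℕ → ℕ → Fm C → Fm C

/-- Free variables of a formula. -/
def Fm.fv {C : Type} : Fm C → List ℕ
  | .atom _ ts => ts.flatMap Tm.fv
  | .rel _ ts => ts.flatMap Tm.fv
  | .and a b => a.fv ++ b.fv
  | .not a => a.fv
  | .prev a => a.fv
  | .since a b => a.fv ++ b.fv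
  | .all xs _ a => a.fv.filter (fun v => v ∉ xs)

/-- A formula is closed if it has no free variables. -/
def Fm.Closed {C : Type} (φ : Fm C) : Prop := φ.fv = []

/-- A session is a finite set of events `p(c₁,…,cₙ)`. -/
abbrev Session (C : Type) := Finset (ℕ × List C)

/-- A history is a (finite) list of sessions. -/
abbrev History (C : Type) := List (Session C)

/-- Update an environment on the list of variables `xs` with the list of values `cs`. -/
def updEnv {C : Type} (ρ : ℕ → C) (xs : List ℕ) (cs : List C) : ℕ → C :=
  fun v => ((xs.zip cs).lookup v).getD (ρ v)

/-- The forcing relation `(h,i) ⊨ φ` (1-based session index `i`, environment `ρ`),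
with interpretation `F` of function symbols and `R` of relation symbols. -/
def Sat {C : Type} (F : ℕ → List C → C) (R : ℕ → List C → Bool) (h : History C) :
    ℕ → (ℕ → C) → Fm C → Prop
  | i, ρ, .atom p ts => (p, ts.map (Tm.eval F ρ)) ∈ h.getD (i - 1) ∅
  | i, ρ, .rel r ts => R r (ts.map (Tm.eval F ρ)) = true
  | i, ρ, .and a b => Sat F R h i ρ a ∧ Sat F R h i ρ b
  | i, ρ, .not a => ¬ Sat F R h i ρ a
  | i, ρ, .prev a => 1 < i ∧ Sat F R h (i - 1) ρ a
  | i, ρ, .since a b =>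
      ∃ j, 1 ≤ j ∧ j ≤ i ∧ Sat F R h j ρ b ∧ ∀ k, j < k → k ≤ i → Sat F R h k ρ a
  | i, ρ, .all xs p a =>
      ∀ cs : List C, cs.length = xs.length → (p, cs) ∈ h.getD (i - 1) ∅ →
        Sat F R h i (updEnv ρ xs cs) a

/-- Simple guards `γ ::= p(u⃗) | γ∧γ | G⁻¹γ | F⁻¹γ`, where the arguments `u⃗` of an atom
are variables (`Sum.inl`) or constants (`Sum.inr`); no function symbols are allowed. -/
inductive SG (C : Type) : Type where
  | atom : ℕ → List (ℕ ⊕ C) → SG C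
  | and : SG C → SG C → SG C
  | galw : SG C → SG C
  | fsome : SG C → SG C

/-- Positive guards `G ::= γ | G∧G | G∨G | G⁻¹G | F⁻¹G | G S G`. -/
inductive PG (C : Type) : Type where
  | simple : SG C → PG C
  | and : PG C → PG C → PG C
  | or : PG C → PG C → PG C
  | galw : PG C → PG C
  | fsome : PG C → PG C
  | since : PG C → PG C → PG C

/-- Semantics of simple guards (environment `ρ`, 1-based session index `i`). -/
def SG.sat {C : Type} (h : History C) : ℕ → (ℕ → C) → SG C → Prop
  | i, ρ, .atom p args => (p, args.map (Sum.elim ρ id)) ∈ h.getD (i - 1) ∅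
  | i, ρ, .and a b => SG.sat h i ρ a ∧ SG.sat h i ρ b
  | i, ρ, .galw a => ∀ j, 1 ≤ j → j ≤ i → SG.sat h j ρ a
  | i, ρ, .fsome a => ∃ j, 1 ≤ j ∧ j ≤ i ∧ SG.sat h j ρ a

/-- Semantics of positive guards. -/
def PG.sat {C : Type} (h : History C) : ℕ → (ℕ → C) → PG C → Prop
  | i, ρ, .simple g => SG.sat h i ρ g
  | i, ρ, .and a b => PG.sat h i ρ a ∧ PG.sat h i ρ b
  | i, ρ, .or a b => PG.sat h i ρ a ∨ PG.sat h i ρ b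
  | i, ρ, .galw a => ∀ j, 1 ≤ j → j ≤ i → PG.sat h j ρ a
  | i, ρ, .fsome a => ∃ j, 1 ≤ j ∧ j ≤ i ∧ PG.sat h j ρ a
  | i, ρ, .since a b =>
      ∃ j, 1 ≤ j ∧ j ≤ i ∧ PG.sat h j ρ b ∧ ∀ k, j < k → k ≤ i → PG.sat h k ρ a

/-- Variables of a simple guard. -/
def SG.vars {C : Type} : SG C → List ℕ
  | .atom _ args => args.filterMap (Sum.elim some fun _ => none)
  | .and a b => a.vars ++ b.vars
  | .galw a => a.vars
  | .fsome a => a.vars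

/-- `G` is a positive guard over the variables `xs`: every constituent simple guard has
exactly the variables `xs` (as a set). -/
def PG.Over {C : Type} (xs : List ℕ) : PG C → Prop
  | .simple g => ∀ x, x ∈ g.vars ↔ x ∈ xs
  | .and a b => PG.Over xs a ∧ PG.Over xs b
  | .or a b => PG.Over xs a ∧ PG.Over xs b
  | .galw a => PG.Over xs a
  | .fsome a => PG.Over xs a
  | .since a b => PG.Over xs a ∧ PG.Over xs b

lemma sg_consts {C : Type} (h : History C) :
    ∀ (g : SG C) (i : ℕ) (ρ : ℕ → C), SG.sat h i ρ g → 1 ≤ i →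
      ∀ x ∈ g.vars, ∃ s ∈ h, ∃ e ∈ s, ρ x ∈ e.2 := by
  intro g
  induction g with
  | atom p args =>
    intro i ρ hs hi x hx
    simp only [SG.sat] at hs
    have hlt : i - 1 < h.length := by
      by_contra hc
      push_neg at hc
      rw [List.getD_eq_default _ _ hc] at hs
      simp at hs
    refine ⟨h.getD (i - 1) ∅, ?_, (p, args.map (Sum.elim ρ id)), hs, ?_⟩
    · rw [List.getD_eq_getElem _ _ hlt]
      exact List.getElem_mem hlt
    · simp only [SG.vars, List.mem_filterMap] at hx
      obtain ⟨a, ha, hax⟩ := hx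
      cases a with
      | inl y =>
        simp at hax
        exact List.mem_map.mpr ⟨Sum.inl y, ha, by simp [hax]⟩
      | inr c => simp at hax
  | and a b iha ihb =>
    intro i ρ hs hi x hx
    simp only [SG.vars, List.mem_append] at hx
    rcases hx with hx | hx
    · exact iha i ρ hs.1 hi x hx
    · exact ihb i ρ hs.2 hi x hx
  | galw a ih =>
    intro i ρ hs hi x hx
    exact ih i ρ (hs i hi le_rfl) hi x hx
  | fsome a ih =>
    intro i ρ hs hi x hx
    obtain ⟨j, hj1, _, hsj⟩ := hs
    exact ih j ρ hsj hj1 x hx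

lemma pg_consts {C : Type} (h : History C) :
    ∀ (G : PG C) (xs : List ℕ) (i : ℕ) (ρ : ℕ → C), PG.sat h i ρ G → 1 ≤ i →
      PG.Over xs G → ∀ x ∈ xs, ∃ s ∈ h, ∃ e ∈ s, ρ x ∈ e.2 := by
  intro G
  induction G with
  | simple g =>
    intro xs i ρ hs hi hover x hx
    exact sg_consts h g i ρ hs hi x ((hover x).mpr hx)
  | and a b iha ihb =>
    intro xs i ρ hs hi hover x hx
    exact iha xs i ρ hs.1 hi hover.1 x hx
  | or a b iha ihb =>
    intro xs i ρ hs hi hover x hx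
    rcases hs with hs | hs
    · exact iha xs i ρ hs hi hover.1 x hx
    · exact ihb xs i ρ hs hi hover.2 x hx
  | galw a ih =>
    intro xs i ρ hs hi hover x hx
    exact ih xs i ρ (hs i hi le_rfl) hi hover x hx
  | fsome a ih =>
    intro xs i ρ hs hi hover x hx
    obtain ⟨j, hj1, _, hsj⟩ := hs
    exact ih xs j ρ hsj hj1 hover x hx
  | since a b iha ihb =>
    intro xs i ρ hs hi hover x hx
    obtain ⟨j, hj1, _, hsj, _⟩ := hs
    exact ihb xs j ρ hsj hj1 hover.2 x hx

lemma updEnv_surj {C : Type} (ρ : ℕ → C) :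
    ∀ (xs : List ℕ) (us : List C), xs.Nodup → us.length = xs.length →
      ∀ c ∈ us, ∃ x ∈ xs, updEnv ρ xs us x = c := by
  intro xs
  induction xs with
  | nil =>
    intro us _ hlen c hc
    simp at hlen
    subst hlen
    simp at hc
  | cons x xs ih =>
    intro us hnd hlen c hc
    cases us with
    | nil => simp at hlen
    | cons u us' =>
      simp only [List.length_cons] at hlen
      rcases List.mem_cons.mp hc with hc | hc
      · subst hc
        refine ⟨x, List.mem_cons_self, ?_⟩
        simp [updEnv, List.lookup]
      · obtain ⟨y, hy, heq⟩ := ih us' (List.nodup_cons.mp hnd).2 (by omega) c hc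
        refine ⟨y, List.mem_cons_of_mem _ hy, ?_⟩
        have hxy : (y == x) = false := by
          have : y ≠ x := fun e => (List.nodup_cons.mp hnd).1 (e ▸ hy)
          simpa using this
        simpa [updEnv, List.lookup, hxy] using heq

lemma lists_finite {C : Type} (S : Set C) (hS : S.Finite) :
    ∀ n, {l : List C | l.length = n ∧ ∀ c ∈ l, c ∈ S}.Finite := by
  intro n
  induction n with
  | zero =>
    apply Set.Finite.subset (Set.finite_singleton ([] : List C))
    rintro l ⟨hl, -⟩
    simp [List.length_eq_zero_iff.mp hl]
  | succ n ih =>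
    apply Set.Finite.subset (Set.Finite.image2 List.cons hS ih)
    rintro l ⟨hl, hmem⟩
    cases l with
    | nil => simp at hl
    | cons c l' =>
      refine Set.mem_image2_of_mem (hmem c (List.mem_cons_self)) ?_
      exact ⟨by simpa using hl, fun d hd => hmem d (List.mem_cons_of_mem _ hd)⟩

/-- For a positive guard `G` over (distinct) variables `x⃗` and a
(nonempty) history `h`, the set of solutions of the guard instantiation problem
`(h, G(x⃗))` — the tuples `u⃗` of constants with `h ⊨ G(u⃗)` — is finite, and every
solution consists only of constants that appear in `h`. -/
theorem guard_solutions_finite {C : Type} (h : History C) (hne : h ≠ [])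
    (G : PG C) (xs : List ℕ) (hnd : xs.Nodup) (hover : PG.Over xs G) :
    {us : List C | us.length = xs.length ∧
        ∀ ρ : ℕ → C, PG.sat h h.length (updEnv ρ xs us) G}.Finite ∧
      ∀ us : List C, us.length = xs.length →
        (∀ ρ : ℕ → C, PG.sat h h.length (updEnv ρ xs us) G) →
        ∀ c ∈ us, ∃ s ∈ h, ∃ e ∈ s, c ∈ e.2 := by
  have hi : 1 ≤ h.length := by
    have := List.length_pos_iff.mpr hne
    omega
  have key : ∀ us : List C, us.length = xs.length →
      (∀ ρ : ℕ → C, PG.sat h h.length (updEnv ρ xs us) G) →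
      ∀ c ∈ us, ∃ s ∈ h, ∃ e ∈ s, c ∈ e.2 := by
    intro us hlen hsat c hc
    obtain ⟨x, hx, heq⟩ := updEnv_surj (fun _ => c) xs us hnd hlen c hc
    have := pg_consts h G xs h.length (updEnv (fun _ => c) xs us)
      (hsat _) hi hover x hx
    rwa [heq] at this
  refine ⟨?_, key⟩
  have hS : {c : C | ∃ s ∈ h, ∃ e ∈ s, c ∈ e.2}.Finite := by
    have : {c : C | ∃ s ∈ h, ∃ e ∈ s, c ∈ e.2} =
        ⋃ s ∈ {s | s ∈ h}, ⋃ e ∈ (s : Set (ℕ × List C)), {c | c ∈ e.2} := by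
      ext c; simp
    rw [this]
    apply Set.Finite.biUnion (List.finite_toSet h)
    intro s _
    apply Set.Finite.biUnion s.finite_toSet
    intro e _
    exact e.2.finite_toSet
  apply (lists_finite _ hS xs.length).subset
  rintro us ⟨hlen, hsat⟩
  exact ⟨hlen, key us hlen hsat⟩
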